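/- arXiv:2512.18521 — 3 statements merged into one kernel-verified Lean document; each statement's English description precedes it below -/
import Mathlib

section
/- Let K be a field and let L₁, L₂, L₃ be 2-dimensional linear subspaces of K⁴ that pairwise intersect trivially (i.e., the corresponding three lines in ℙ³ are pairwise disjoint). Then there exists a nonzero quadratic form q on K⁴ that vanishes on L₁, L₂, and L₃; moreover every quadratic form on K⁴ vanishing on L₁, L₂, and L₃ is a scalar multiple of q, and the polar bilinear form of q (given by polar(q)(x,y) = q(x+y) − q(x) − q(y)) is nondegenerate. In other words, there is a unique smooth quadric surface in ℙ³ containing three given pairwise disjoint lines. -/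
open Submodule Module QuadraticMap

private lemma quad_expand4 {K : Type*} [Field K] {M : Type*} [AddCommGroup M] [Module K M]
    (Q : QuadraticForm K M) (r0 r1 r2 r3 : K) (v0 v1 v2 v3 : M) :
    Q (r0 • v0 + r1 • v1 + r2 • v2 + r3 • v3) =
      r0 * r0 * Q v0 + r1 * r1 * Q v1 + r2 * r2 * Q v2 + r3 * r3 * Q v3
      + r0 * r1 * polar Q v0 v1 + r0 * r2 * polar Q v0 v2
      + r0 * r3 * polar Q v0 v3 + r1 * r2 * polar Q v1 v2
      + r1 * r3 * polar Q v1 v3 + r2 * r3 * polar Q v2 v3 := by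
  rw [QuadraticMap.map_add (⇑Q) (r0 • v0 + r1 • v1 + r2 • v2) (r3 • v3),
    QuadraticMap.map_add (⇑Q) (r0 • v0 + r1 • v1) (r2 • v2),
    QuadraticMap.map_add (⇑Q) (r0 • v0) (r1 • v1)]
  simp only [polar_add_left, polar_smul_left, polar_smul_right, QuadraticMap.map_smul,
    smul_eq_mul]
  ring

private lemma span_pair_of_basis {K : Type*} [Field K] {M : Type*} [AddCommGroup M] [Module K M]
    (p : Submodule K M) (v : Basis (Fin 2) K p) :
    p = Submodule.span K {(v 0 : M), (v 1 : M)} := by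
  have h1 : Set.range (fun i => ((v i : M))) = {(v 0 : M), (v 1 : M)} := by
    ext x
    simp [Fin.exists_fin_two, eq_comm]
  calc p = Submodule.map p.subtype ⊤ := (Submodule.map_subtype_top p).symm
    _ = Submodule.map p.subtype (Submodule.span K (Set.range v)) := by rw [v.span_eq]
    _ = Submodule.span K (p.subtype '' Set.range v) := Submodule.map_span _ _
    _ = _ := by rw [← Set.range_comp]; exact congrArg _ h1

/-- **Unique smooth quadric through three pairwise skew lines.**
Let `K` be a field and `L₁, L₂, L₃` be 2-dimensional linear subspaces of `K⁴`
that pairwise intersect trivially (three pairwise disjoint lines in `ℙ³`).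
Then there is a nonzero quadratic form `q` on `K⁴` vanishing on `L₁, L₂, L₃`;
every quadratic form vanishing on the three subspaces is a scalar multiple of `q`;
and the polar bilinear form of `q` is nondegenerate. -/
theorem unique_smooth_quadric_through_three_skew_lines
    (K : Type*) [Field K]
    (L₁ L₂ L₃ : Submodule K (Fin 4 → K))
    (hdim₁ : Module.finrank K L₁ = 2)
    (hdim₂ : Module.finrank K L₂ = 2)
    (hdim₃ : Module.finrank K L₃ = 2)
    (h₁₂ : L₁ ⊓ L₂ = ⊥) (h₁₃ : L₁ ⊓ L₃ = ⊥) (h₂₃ : L₂ ⊓ L₃ = ⊥) :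
    ∃ q : QuadraticForm K (Fin 4 → K),
      q ≠ 0 ∧
      (∀ x ∈ L₁, q x = 0) ∧ (∀ x ∈ L₂, q x = 0) ∧ (∀ x ∈ L₃, q x = 0) ∧
      (∀ q' : QuadraticForm K (Fin 4 → K),
        (∀ x ∈ L₁, q' x = 0) → (∀ x ∈ L₂, q' x = 0) → (∀ x ∈ L₃, q' x = 0) →
        ∃ c : K, q' = c • q) ∧
      (∀ x : Fin 4 → K, (∀ y : Fin 4 → K, QuadraticMap.polar q x y = 0) → x = 0) := by
  classical
  have hfin : Module.finrank K (Fin 4 → K) = 4 := by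
    simp [Module.finrank_fintype_fun_eq_card]
  have hsup : L₁ ⊔ L₂ = ⊤ := by
    apply Submodule.eq_top_of_finrank_eq
    have h := Submodule.finrank_sup_add_finrank_inf_eq L₁ L₂
    rw [h₁₂, finrank_bot, hdim₁, hdim₂] at h
    rw [hfin]
    omega
  have hcompl : IsCompl L₁ L₂ := ⟨disjoint_iff.2 h₁₂, codisjoint_iff.2 hsup⟩
  set p₁ := L₁.projectionOnto L₂ hcompl with hp₁
  set p₂ := L₂.projectionOnto L₁ hcompl.symm with hp₂
  let f : Basis (Fin 2) K L₃ := Module.finBasisOfFinrankEq K L₃ hdim₃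
  let E₁ : L₃ →ₗ[K] L₁ := p₁ ∘ₗ L₃.subtype
  let E₂ : L₃ →ₗ[K] L₂ := p₂ ∘ₗ L₃.subtype
  have hE₁ : Function.Injective E₁ := by
    rw [← LinearMap.ker_eq_bot]
    ext x
    simp only [LinearMap.mem_ker, Submodule.mem_bot, E₁, LinearMap.comp_apply,
      Submodule.subtype_apply, hp₁, Submodule.linearProjOfIsCompl_apply_eq_zero_iff]
    constructor
    · intro hx
      have : (x : Fin 4 → K) ∈ L₂ ⊓ L₃ := ⟨hx, x.2⟩
      rw [h₂₃] at this
      exact Subtype.ext this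
    · rintro rfl; simp
  have hE₂ : Function.Injective E₂ := by
    rw [← LinearMap.ker_eq_bot]
    ext x
    simp only [LinearMap.mem_ker, Submodule.mem_bot, E₂, LinearMap.comp_apply,
      Submodule.subtype_apply, hp₂, Submodule.linearProjOfIsCompl_apply_eq_zero_iff]
    constructor
    · intro hx
      have : (x : Fin 4 → K) ∈ L₁ ⊓ L₃ := ⟨hx, x.2⟩
      rw [h₁₃] at this
      exact Subtype.ext this
    · rintro rfl; simp
  let e : Basis (Fin 2) K L₁ :=
    f.map (E₁.linearEquivOfInjective hE₁ (hdim₃.trans hdim₁.symm))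
  let g : Basis (Fin 2) K L₂ :=
    f.map (E₂.linearEquivOfInjective hE₂ (hdim₃.trans hdim₂.symm))
  have he : ∀ i, (e i : Fin 4 → K) = p₁ (f i) := fun i => by
    simp [e, Basis.map_apply, LinearMap.linearEquivOfInjective_apply, E₁]
  have hg : ∀ i, (g i : Fin 4 → K) = p₂ (f i) := fun i => by
    simp [g, Basis.map_apply, LinearMap.linearEquivOfInjective_apply, E₂]
  have hfeg : ∀ i, (f i : Fin 4 → K) = (e i : Fin 4 → K) + g i := fun i => by
    rw [he, hg]
    exact (Submodule.projection_add_projection_eq_self hcompl (f i)).symm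
  let b : Basis (Fin 4) K (Fin 4 → K) :=
    (((e.prod g).map (Submodule.prodEquivOfIsCompl L₁ L₂ hcompl)).reindex finSumFinEquiv)
  have hb : ∀ (j : Fin 2 ⊕ Fin 2), b (finSumFinEquiv j) =
      Sum.elim (fun i => (e i : Fin 4 → K)) (fun i => (g i : Fin 4 → K)) j := by
    rintro (i | i) <;>
      simp [b, Basis.reindex_apply, Basis.map_apply, Basis.prod_apply,
        Submodule.coe_prodEquivOfIsCompl, LinearMap.coprod_apply]
  have hb0 : b 0 = (e 0 : Fin 4 → K) := hb (Sum.inl 0)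
  have hb1 : b 1 = (e 1 : Fin 4 → K) := hb (Sum.inl 1)
  have hb2 : b 2 = (g 0 : Fin 4 → K) := hb (Sum.inr 0)
  have hb3 : b 3 = (g 1 : Fin 4 → K) := hb (Sum.inr 1)
  have hL₁ : L₁ = Submodule.span K {b 0, b 1} := by
    rw [hb0, hb1]; exact span_pair_of_basis L₁ e
  have hL₂ : L₂ = Submodule.span K {b 2, b 3} := by
    rw [hb2, hb3]; exact span_pair_of_basis L₂ g
  have hL₃ : L₃ = Submodule.span K {b 0 + b 2, b 1 + b 3} := by
    rw [hb0, hb1, hb2, hb3, ← hfeg 0, ← hfeg 1]; exact span_pair_of_basis L₃ f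
  -- the bilinear and quadratic form
  let B : LinearMap.BilinMap K (Fin 4 → K) K := LinearMap.mk₂ K
    (fun x y => b.repr x 0 * b.repr y 3 - b.repr x 1 * b.repr y 2)
    (fun x x' y => by simp only [map_add, Finsupp.add_apply]; ring)
    (fun a x y => by
      simp only [_root_.map_smul, Finsupp.smul_apply, smul_eq_mul]; ring)
    (fun x y y' => by simp only [map_add, Finsupp.add_apply]; ring)
    (fun a x y => by
      simp only [_root_.map_smul, Finsupp.smul_apply, smul_eq_mul]; ring)
  let q : QuadraticForm K (Fin 4 → K) := B.toQuadraticMap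
  have hq : ∀ x, q x = b.repr x 0 * b.repr x 3 - b.repr x 1 * b.repr x 2 := fun x => rfl
  have hBapp : ∀ x y, B x y = b.repr x 0 * b.repr y 3 - b.repr x 1 * b.repr y 2 :=
    fun x y => rfl
  have hpolar : ∀ x y, polar q x y = B x y + B y x :=
    fun x y => LinearMap.BilinMap.polar_toQuadraticMap (B := B) x y
  -- coordinate computation helper
  have hval : ∀ (r0 r1 r2 r3 : K) (k : Fin 4),
      b.repr (r0 • b 0 + r1 • b 1 + r2 • b 2 + r3 • b 3) k =
        r0 * (if (0 : Fin 4) = k then 1 else 0) + r1 * (if (1 : Fin 4) = k then 1 else 0)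
        + r2 * (if (2 : Fin 4) = k then 1 else 0) + r3 * (if (3 : Fin 4) = k then 1 else 0) := by
    intro r0 r1 r2 r3 k
    rw [map_add, map_add, map_add, _root_.map_smul, _root_.map_smul, _root_.map_smul,
      _root_.map_smul, Finsupp.add_apply, Finsupp.add_apply, Finsupp.add_apply,
      Finsupp.smul_apply, Finsupp.smul_apply, Finsupp.smul_apply, Finsupp.smul_apply,
      b.repr_self_apply, b.repr_self_apply, b.repr_self_apply, b.repr_self_apply,
      smul_eq_mul, smul_eq_mul, smul_eq_mul, smul_eq_mul]
  have hqval : ∀ (r0 r1 r2 r3 : K),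
      q (r0 • b 0 + r1 • b 1 + r2 • b 2 + r3 • b 3) = r0 * r3 - r1 * r2 := by
    intro r0 r1 r2 r3
    rw [hq, hval, hval, hval, hval]
    simp
    try ring
  refine ⟨q, ?_, ?_, ?_, ?_, ?_, ?_⟩
  · -- q ≠ 0
    intro h0
    have h1 : q ((1 : K) • b 0 + (0 : K) • b 1 + (0 : K) • b 2 + (1 : K) • b 3) = 0 := by
      rw [h0]; rfl
    rw [hqval] at h1
    norm_num at h1
  · -- vanishing on L₁
    intro x hx
    obtain ⟨a, c, rfl⟩ := Submodule.mem_span_pair.1 (hL₁ ▸ hx)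
    have : a • b 0 + c • b 1 = a • b 0 + c • b 1 + (0 : K) • b 2 + (0 : K) • b 3 := by
      simp
    rw [this, hqval]
    ring
  · -- vanishing on L₂
    intro x hx
    obtain ⟨a, c, rfl⟩ := Submodule.mem_span_pair.1 (hL₂ ▸ hx)
    have : a • b 2 + c • b 3 = (0 : K) • b 0 + (0 : K) • b 1 + a • b 2 + c • b 3 := by
      simp
    rw [this, hqval]
    ring
  · -- vanishing on L₃
    intro x hx
    obtain ⟨a, c, rfl⟩ := Submodule.mem_span_pair.1 (hL₃ ▸ hx)
    have : a • (b 0 + b 2) + c • (b 1 + b 3) = a • b 0 + c • b 1 + a • b 2 + c • b 3 := by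
      rw [smul_add, smul_add]; abel
    rw [this, hqval]
    ring
  · -- uniqueness
    intro q' v₁ v₂ v₃
    have m0 : b 0 ∈ L₁ := hL₁ ▸ Submodule.subset_span (by simp)
    have m1 : b 1 ∈ L₁ := hL₁ ▸ Submodule.subset_span (by simp)
    have m2 : b 2 ∈ L₂ := hL₂ ▸ Submodule.subset_span (by simp)
    have m3 : b 3 ∈ L₂ := hL₂ ▸ Submodule.subset_span (by simp)
    have m02 : b 0 + b 2 ∈ L₃ := hL₃ ▸ Submodule.subset_span (by simp)
    have m13 : b 1 + b 3 ∈ L₃ := hL₃ ▸ Submodule.subset_span (by simp)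
    set c := polar q' (b 0) (b 3) with hc
    have p01 : polar q' (b 0) (b 1) = 0 := by
      simp only [polar, v₁ _ (L₁.add_mem m0 m1), v₁ _ m0, v₁ _ m1, sub_zero]
    have p23 : polar q' (b 2) (b 3) = 0 := by
      simp only [polar, v₂ _ (L₂.add_mem m2 m3), v₂ _ m2, v₂ _ m3, sub_zero]
    have p02 : polar q' (b 0) (b 2) = 0 := by
      simp only [polar, v₃ _ m02, v₁ _ m0, v₂ _ m2, sub_zero]
    have p13 : polar q' (b 1) (b 3) = 0 := by
      simp only [polar, v₃ _ m13, v₁ _ m1, v₂ _ m3, sub_zero]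
    have p12 : polar q' (b 1) (b 2) = -c := by
      have h0 : q' ((b 0 + b 2) + (b 1 + b 3)) = 0 := v₃ _ (L₃.add_mem m02 m13)
      rw [QuadraticMap.map_add (⇑q') (b 0 + b 2) (b 1 + b 3), v₃ _ m02, v₃ _ m13,
        polar_add_left, polar_add_right, polar_add_right, p01,
        polar_comm (⇑q') (b 2) (b 1)] at h0
      rw [hc]
      linear_combination h0 - p23
    refine ⟨c, QuadraticMap.ext fun x => ?_⟩
    have hx : (b.repr x 0) • b 0 + (b.repr x 1) • b 1 + (b.repr x 2) • b 2
        + (b.repr x 3) • b 3 = x := by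
      have h := b.sum_repr x
      rwa [Fin.sum_univ_four] at h
    have e1 : q' x = c * (b.repr x 0 * b.repr x 3 - b.repr x 1 * b.repr x 2) := by
      rw [← hx, quad_expand4 q' (b.repr x 0) (b.repr x 1) (b.repr x 2) (b.repr x 3)
        (b 0) (b 1) (b 2) (b 3)]
      rw [v₁ _ m0, v₁ _ m1, v₂ _ m2, v₂ _ m3, p01, p02, p12, p13, p23, ← hc]
      have h2 : b.repr (b.repr x 0 • b 0 + b.repr x 1 • b 1 + b.repr x 2 • b 2
          + b.repr x 3 • b 3) = b.repr x := by rw [hx]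
      rw [h2]
      ring
    rw [e1, QuadraticMap.smul_apply, hq, smul_eq_mul]
  · -- nondegeneracy
    intro x hy
    have coord : ∀ j k : Fin 4, b.repr (b j) k = if j = k then 1 else 0 :=
      fun j k => b.repr_self_apply j k
    have h3 := hy (b 3); have h2 := hy (b 2); have h1 := hy (b 1); have h0 := hy (b 0)
    rw [hpolar, hBapp, hBapp, coord, coord, coord, coord] at h3 h2 h1 h0
    simp at h0 h1 h2 h3
    have hx : (b.repr x 0) • b 0 + (b.repr x 1) • b 1 + (b.repr x 2) • b 2
        + (b.repr x 3) • b 3 = x := by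
      have h := b.sum_repr x
      rwa [Fin.sum_univ_four] at h
    rw [← hx, h0, h1, h2, h3]
    simp
end

section
/- Let K be a field and let L ⊆ K⁴ be a 2-dimensional subspace on which the Segre quadratic form q(x₀,x₁,x₂,x₃) = x₀x₃ − x₁x₂ vanishes identically. Then either L = ℓ(u,v) for some (u,v) ∈ K² ∖ {0} or L = m(s,t) for some (s,t) ∈ K² ∖ {0}. That is, every line contained in the smooth quadric V(x₀x₃ − x₁x₂) ⊂ ℙ³ belongs to one of its two rulings. -/
/-- The line `ℓ(u,v)` of the first ruling of the Segre quadric: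
the subspace of `K⁴` spanned by `(u,v,0,0)` and `(0,0,u,v)`. -/
def rulingL (K : Type*) [Field K] (u v : K) : Submodule K (Fin 4 → K) :=
  Submodule.span K {![u, v, 0, 0], ![0, 0, u, v]}

/-- The line `m(s,t)` of the second ruling of the Segre quadric:
the subspace of `K⁴` spanned by `(s,0,t,0)` and `(0,s,0,t)`. -/
def rulingM (K : Type*) [Field K] (s t : K) : Submodule K (Fin 4 → K) :=
  Submodule.span K {![s, 0, t, 0], ![0, s, 0, t]}

section helpers
variable {K : Type*} [Field K]

lemma mem_rulingL {u v : K} (x : Fin 4 → K) (a b : K)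
    (h0 : x 0 = a*u) (h1 : x 1 = a*v) (h2 : x 2 = b*u) (h3 : x 3 = b*v) :
    x ∈ rulingL K u v := by
  rw [rulingL, Submodule.mem_span_pair]
  refine ⟨a, b, ?_⟩
  funext i
  fin_cases i <;> simp [h0, h1, h2, h3]

lemma mem_rulingM {s t : K} (x : Fin 4 → K) (a b : K)
    (h0 : x 0 = s*a) (h1 : x 1 = s*b) (h2 : x 2 = t*a) (h3 : x 3 = t*b) :
    x ∈ rulingM K s t := by
  rw [rulingM, Submodule.mem_span_pair]
  refine ⟨a, b, ?_⟩
  funext i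
  fin_cases i <;> simp [h0, h1, h2, h3] <;> ring

lemma decomp (x : Fin 4 → K) (hx : x ≠ 0) (h : x 0 * x 3 - x 1 * x 2 = 0) :
    ∃ c0 c1 r0 r1 : K, (c0, c1) ≠ (0,0) ∧ (r0, r1) ≠ (0,0) ∧
      x 0 = c0*r0 ∧ x 1 = c0*r1 ∧ x 2 = c1*r0 ∧ x 3 = c1*r1 := by
  by_cases h0 : x 0 = 0
  · by_cases h1 : x 1 = 0
    · by_cases h2 : x 2 = 0
      · have h3 : x 3 ≠ 0 := by
          intro h3
          apply hx
          funext i; fin_cases i <;> assumption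
        exact ⟨0, x 3, 0, 1, by simp [h3, Prod.ext_iff], by simp [Prod.ext_iff],
          by simp [h0], by simp [h1], by simp [h2], by ring⟩
      · -- x0 = x1 = 0, x2 ≠ 0
        exact ⟨0, x 2, 1, x 3 / x 2, by simp [h2, Prod.ext_iff], by simp [Prod.ext_iff],
          by simp [h0], by simp [h1], by ring, by field_simp⟩
    · -- x0 = 0, x1 ≠ 0; then x1*x2 = 0 so x2 = 0
      have h2 : x 2 = 0 := by
        have : x 1 * x 2 = 0 := by linear_combination x 3 * h0 - h
        rcases mul_eq_zero.mp this with h' | h'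
        · exact absurd h' h1
        · exact h'
      exact ⟨x 1, x 3, 0, 1, by simp [h1, Prod.ext_iff], by simp [Prod.ext_iff],
        by simp [h0], by ring, by simp [h2], by ring⟩
  · exact ⟨x 0, x 2, 1, x 1 / x 0, by simp [h0, Prod.ext_iff], by simp [Prod.ext_iff],
      by ring, by field_simp, by ring, by field_simp; linear_combination h⟩

lemma prop_of {c0 c1 d0 d1 : K} (h : (c0, c1) ≠ (0,0)) (hd : c0*d1 - c1*d0 = 0) :
    ∃ l, d0 = l*c0 ∧ d1 = l*c1 := by
  by_cases h0 : c0 = 0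
  · have h1 : c1 ≠ 0 := by
      intro h1; exact h (by simp [h0, h1, Prod.ext_iff])
    have hd0 : d0 = 0 := by
      have : c1 * d0 = 0 := by linear_combination -hd + d1 * h0
      rcases mul_eq_zero.mp this with h' | h'
      · exact absurd h' h1
      · exact h'
    exact ⟨d1 / c1, by simp [h0, hd0], by field_simp⟩
  · refine ⟨d0 / c0, by field_simp, ?_⟩
    field_simp
    linear_combination hd

lemma span_pair_finrank_le (a b : Fin 4 → K) :
    Module.finrank K (Submodule.span K {a, b}) ≤ 2 := by
  classical
  calc Module.finrank K (Submodule.span K ({a, b} : Set (Fin 4 → K)))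
      ≤ ({a, b} : Set (Fin 4 → K)).toFinset.card := finrank_span_le_card _
    _ ≤ 2 := by
        simp only [Set.toFinset_insert, Set.toFinset_singleton]
        exact (Finset.card_insert_le _ _).trans (by simp)

end helpers

/-- **Every line on the Segre quadric lies in one of the two rulings.**
If `L ⊆ K⁴` is a 2-dimensional subspace on which the Segre form
`x₀x₃ - x₁x₂` vanishes identically, then `L = ℓ(u,v)` for some `(u,v) ≠ 0`
or `L = m(s,t)` for some `(s,t) ≠ 0`. -/
theorem line_on_segre_quadric_is_in_a_ruling
    (K : Type*) [Field K] (L : Submodule K (Fin 4 → K))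
    (hdim : Module.finrank K L = 2)
    (hq : ∀ x ∈ L, x 0 * x 3 - x 1 * x 2 = 0) :
    (∃ u v : K, (u, v) ≠ (0, 0) ∧ L = rulingL K u v) ∨
    (∃ s t : K, (s, t) ≠ (0, 0) ∧ L = rulingM K s t) := by
  classical
  have b : Module.Basis (Fin 2) K L := Module.finBasisOfFinrankEq K L hdim
  set e : Fin 4 → K := ((b 0 : L) : Fin 4 → K) with hedef
  set f : Fin 4 → K := ((b 1 : L) : Fin 4 → K) with hfdef
  have heL : e ∈ L := (b 0).2
  have hfL : f ∈ L := (b 1).2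
  have hene : e ≠ 0 := fun h => Module.Basis.ne_zero b 0 (Subtype.ext h)
  have hfne : f ≠ 0 := fun h => Module.Basis.ne_zero b 1 (Subtype.ext h)
  -- L is spanned by e and f
  have hLspan : L ≤ Submodule.span K {e, f} := by
    intro x hx
    have hrep := b.sum_repr ⟨x, hx⟩
    rw [Fin.sum_univ_two] at hrep
    have : x = b.repr ⟨x, hx⟩ 0 • e + b.repr ⟨x, hx⟩ 1 • f := by
      rw [hedef, hfdef, ← Submodule.coe_smul, ← Submodule.coe_smul,
        ← Submodule.coe_add, hrep]
    rw [this]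
    exact Submodule.add_mem _
      (Submodule.smul_mem _ _ (Submodule.subset_span (by simp)))
      (Submodule.smul_mem _ _ (Submodule.subset_span (by simp)))
  have he := hq e heL
  have hf := hq f hfL
  have hef := hq (e + f) (L.add_mem heL hfL)
  simp only [Pi.add_apply] at hef
  obtain ⟨c0, c1, r0, r1, hcne, hrne, e0, e1, e2, e3⟩ := decomp e hene he
  obtain ⟨d0, d1, s0, s1, hdne, hsne, f0, f1, f2, f3⟩ := decomp f hfne hf
  rw [e0, e1, e2, e3] at he
  rw [f0, f1, f2, f3] at hf
  rw [e0, e1, e2, e3, f0, f1, f2, f3] at hef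
  have key : (r0 * s1 - r1 * s0) * (c0 * d1 - c1 * d0) = 0 := by
    linear_combination hef - he - hf
  rcases mul_eq_zero.mp key with hk | hk
  · -- rows proportional: first ruling with (u,v) = (r0, r1)
    obtain ⟨l, hl0, hl1⟩ := prop_of hrne hk
    left
    refine ⟨r0, r1, hrne, ?_⟩
    have hle : L ≤ rulingL K r0 r1 := by
      refine le_trans hLspan (Submodule.span_le.mpr ?_)
      rintro x (rfl | rfl)
      · exact mem_rulingL _ c0 c1 e0 e1 e2 e3
      · exact mem_rulingL _ (d0 * l) (d1 * l)
          (by rw [f0, hl0]; ring) (by rw [f1, hl1]; ring)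
          (by rw [f2, hl0]; ring) (by rw [f3, hl1]; ring)
    refine (Submodule.eq_of_le_of_finrank_le hle ?_).symm ▸ rfl
    rw [hdim]
    exact span_pair_finrank_le _ _
  · -- columns proportional: second ruling with (s,t) = (c0, c1)
    obtain ⟨l, hl0, hl1⟩ := prop_of hcne hk
    right
    refine ⟨c0, c1, hcne, ?_⟩
    have hle : L ≤ rulingM K c0 c1 := by
      refine le_trans hLspan (Submodule.span_le.mpr ?_)
      rintro x (rfl | rfl)
      · exact mem_rulingM _ r0 r1 e0 e1 e2 e3
      · exact mem_rulingM _ (s0 * l) (s1 * l)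
          (by rw [f0, hl0]; ring) (by rw [f1, hl0]; ring)
          (by rw [f2, hl1]; ring) (by rw [f3, hl1]; ring)
    refine (Submodule.eq_of_le_of_finrank_le hle ?_).symm ▸ rfl
    rw [hdim]
    exact span_pair_finrank_le _ _
end

section
/- Let D, g ∈ ℂ[X] be polynomials such that D ≠ 0, g is not a scalar multiple of D, and D and g have no common complex root. Then for all but finitely many c ∈ ℂ, the polynomial c·D + g has degree equal to max(deg D, deg g), is squarefree (all its complex roots are simple), and has no root in common with D. (Generic fibers of the rational function −g/D are reduced and avoid the poles.) -/
open Polynomial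

/-- A nonzero nonunit complex polynomial has a root. -/
private lemma aux_coprime_of_no_common_root (D g : Polynomial ℂ) (hD : D ≠ 0)
    (hcop : ∀ z : ℂ, ¬ (D.eval z = 0 ∧ g.eval z = 0)) : IsCoprime D g := by
  classical
  rw [← EuclideanDomain.gcd_isUnit_iff]
  by_contra h
  have hq0 : EuclideanDomain.gcd D g ≠ 0 := by
    intro h0
    exact hD (EuclideanDomain.gcd_eq_zero_iff.mp h0).1
  have hdeg : (EuclideanDomain.gcd D g).degree ≠ 0 := by
    intro h0
    exact h (Polynomial.isUnit_iff_degree_eq_zero.mpr h0)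
  obtain ⟨z, hz⟩ := Complex.isAlgClosed.exists_root _ hdeg
  exact hcop z ⟨Polynomial.eval_eq_zero_of_dvd_of_eval_eq_zero
      (EuclideanDomain.gcd_dvd_left D g) hz,
    Polynomial.eval_eq_zero_of_dvd_of_eval_eq_zero
      (EuclideanDomain.gcd_dvd_right D g) hz⟩

/-- **Generic fibers of a rational function are reduced and avoid the poles.**
Let `D, g ∈ ℂ[X]` with `D ≠ 0`, `g` not a scalar multiple of `D`, and `D, g`
without common complex root.  Then for all but finitely many `c ∈ ℂ`, the
polynomial `c·D + g` has degree `max(deg D, deg g)`, is squarefree, and has no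
root in common with `D`. -/
theorem generic_fiber_of_rational_function_reduced
    (D g : Polynomial ℂ) (hD : D ≠ 0)
    (hg : ¬ ∃ c : ℂ, g = c • D)
    (hcop : ∀ z : ℂ, ¬ (D.eval z = 0 ∧ g.eval z = 0)) :
    {c : ℂ | ¬ ((Polynomial.C c * D + g).natDegree = max D.natDegree g.natDegree ∧
      Squarefree (Polynomial.C c * D + g) ∧
      ∀ z : ℂ, D.eval z = 0 → (Polynomial.C c * D + g).eval z ≠ 0)}.Finite := by
  classical
  have hco : IsCoprime D g := aux_coprime_of_no_common_root D g hD hcop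
  set W : Polynomial ℂ := D * derivative g - derivative D * g with hWdef
  have hW : W ≠ 0 := by
    intro h
    have h1 : D * derivative g = derivative D * g := by
      have := sub_eq_zero.mp h
      linear_combination this
    have h2 : D ∣ derivative D := by
      exact hco.dvd_of_dvd_mul_right ⟨derivative g, h1.symm⟩
    have hD' : derivative D = 0 := by
      by_contra hne
      exact absurd (Polynomial.degree_le_of_dvd h2 hne)
        (not_le.mpr (Polynomial.degree_derivative_lt hD))
    have hg' : derivative g = 0 := by
      have : D * derivative g = 0 := by rw [h1, hD', zero_mul]
      exact (mul_eq_zero.mp this).resolve_left hD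
    obtain ⟨a, ha⟩ : ∃ a, D = Polynomial.C a :=
      ⟨D.coeff 0, Polynomial.eq_C_of_natDegree_eq_zero
        (Polynomial.natDegree_eq_zero_of_derivative_eq_zero hD')⟩
    obtain ⟨b, hb⟩ : ∃ b, g = Polynomial.C b :=
      ⟨g.coeff 0, Polynomial.eq_C_of_natDegree_eq_zero
        (Polynomial.natDegree_eq_zero_of_derivative_eq_zero hg')⟩
    have ha0 : a ≠ 0 := by rintro rfl; exact hD (by simp [ha])
    refine hg ⟨b / a, ?_⟩
    rw [ha, hb, Polynomial.smul_C]
    congr 1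
    field_simp
    rw [smul_eq_mul, div_mul_cancel₀ b ha0]
  have hWroots : {z : ℂ | W.eval z = 0}.Finite := Polynomial.finite_setOf_isRoot hW
  refine Set.Finite.subset (Set.Finite.union
    ((Set.finite_singleton (-(g.leadingCoeff / D.leadingCoeff))).insert 0)
    (hWroots.image (fun z => -(g.eval z / D.eval z)))) ?_
  intro c hc
  by_contra hmem
  simp only [Set.mem_union, Set.mem_insert_iff, Set.mem_singleton_iff, Set.mem_image,
    not_or, not_exists] at hmem
  obtain ⟨⟨hc0, hc1⟩, hc2⟩ := hmem
  apply hc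
  set p : Polynomial ℂ := Polynomial.C c * D + g with hpdef
  have hp0 : p ≠ 0 := by
    intro h
    refine hg ⟨-c, ?_⟩
    have : g = -(Polynomial.C c * D) := by
      have := h; rw [hpdef] at this; linear_combination this
    rw [this, Polynomial.smul_eq_C_mul, map_neg]; ring
  refine ⟨?_, ?_, ?_⟩
  · -- degree condition
    rcases lt_trichotomy D.natDegree g.natDegree with hlt | heq | hgt
    · have hdlt : (Polynomial.C c * D).degree < g.degree := by
        rw [Polynomial.degree_C_mul (by exact hc0)]
        exact Polynomial.degree_lt_degree hlt
      rw [hpdef, Polynomial.degree_add_eq_right_of_degree_lt hdlt |>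
        Polynomial.natDegree_eq_of_degree_eq, max_eq_right hlt.le]
    · -- equal degrees: use the leading coefficient
      have hle : p.natDegree ≤ D.natDegree := by
        refine le_trans (Polynomial.natDegree_add_le _ _) ?_
        simp only [max_le_iff]
        exact ⟨Polynomial.natDegree_C_mul_le c D, heq.ge⟩
      have hcoeff : p.coeff D.natDegree = c * D.leadingCoeff + g.leadingCoeff := by
        rw [hpdef, Polynomial.coeff_add, Polynomial.coeff_C_mul, Polynomial.leadingCoeff,
          Polynomial.leadingCoeff, heq]
      have hne : p.coeff D.natDegree ≠ 0 := by
        rw [hcoeff]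
        intro h0
        apply hc1
        have hlD : D.leadingCoeff ≠ 0 := Polynomial.leadingCoeff_ne_zero.mpr hD
        field_simp
        linear_combination h0
      have := Polynomial.le_natDegree_of_ne_zero hne
      rw [le_antisymm hle this, heq, max_self]
    · have hdlt : g.degree < (Polynomial.C c * D).degree := by
        rw [Polynomial.degree_C_mul (by exact hc0)]
        exact Polynomial.degree_lt_degree hgt
      have := Polynomial.natDegree_eq_of_degree_eq
        (Polynomial.degree_add_eq_left_of_degree_lt hdlt)
      rw [hpdef, this, Polynomial.natDegree_C_mul (by exact hc0), max_eq_left hgt.le]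
  · -- squarefree
    refine Polynomial.Separable.squarefree ?_
    rw [Polynomial.separable_def]
    rw [← EuclideanDomain.gcd_isUnit_iff]
    by_contra h
    have hq0 : EuclideanDomain.gcd p (derivative p) ≠ 0 := by
      intro h0
      exact hp0 (EuclideanDomain.gcd_eq_zero_iff.mp h0).1
    have hdeg : (EuclideanDomain.gcd p (derivative p)).degree ≠ 0 := by
      intro h0
      exact h (Polynomial.isUnit_iff_degree_eq_zero.mpr h0)
    obtain ⟨z, hz⟩ := Complex.isAlgClosed.exists_root _ hdeg
    have hpz : p.eval z = 0 := Polynomial.eval_eq_zero_of_dvd_of_eval_eq_zero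
      (EuclideanDomain.gcd_dvd_left _ _) hz
    have hpz' : (derivative p).eval z = 0 := Polynomial.eval_eq_zero_of_dvd_of_eval_eq_zero
      (EuclideanDomain.gcd_dvd_right _ _) hz
    have e1 : c * D.eval z + g.eval z = 0 := by
      have := hpz; rw [hpdef] at this; simpa using this
    have e2 : c * (derivative D).eval z + (derivative g).eval z = 0 := by
      have := hpz'; rw [hpdef] at this
      simp only [derivative_add, derivative_C_mul, Polynomial.eval_add,
        Polynomial.eval_mul, Polynomial.eval_C] at this
      simpa using this
    have hDz : D.eval z ≠ 0 := by
      intro h0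
      refine hcop z ⟨h0, ?_⟩
      linear_combination e1 - c * h0
    have hWz : W.eval z = 0 := by
      rw [hWdef]
      simp only [Polynomial.eval_sub, Polynomial.eval_mul]
      linear_combination D.eval z * e2 - (derivative D).eval z * e1
    refine hc2 z ⟨hWz, ?_⟩
    field_simp
    linear_combination -e1
  · -- no common root with D
    intro z hz h0
    refine hcop z ⟨hz, ?_⟩
    have : (Polynomial.C c * D + g).eval z = c * D.eval z + g.eval z := by simp
    rw [this, hz, mul_zero, zero_add] at h0
    exact h0
end
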